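/- For every c ≥ 2 and α, β, γ ∈ ℂ, the 2^c × 2^c tridiagonal Toeplitz matrix satisfies the Kronecker-product recursion D^{(c)}_{α,β,γ} = I ⊗ D^{(c−1)}_{α,β,γ} + β · (J ⊗ (J')^{⊗(c−1)}) + γ · (J' ⊗ J^{⊗(c−1)}), where (J)^{⊗k} denotes the k-fold Kronecker power of J. -/

import Mathlib

/- STATEMENT 1: Kronecker-product recursion for the tridiagonal Toeplitz
   matrix: `D^{(c)}_{α,β,γ} = I ⊗ D^{(c−1)}_{α,β,γ}
   + β (J ⊗ (J')^{⊗(c−1)}) + γ (J' ⊗ J^{⊗(c−1)})` for c ≥ 2. -/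

open Kronecker

noncomputable section

/-- The `2^c × 2^c` tridiagonal Toeplitz matrix with diagonal `α`,
    superdiagonal `β` and subdiagonal `γ`. -/
def triD (c : ℕ) (α β γ : ℂ) : Matrix (Fin (2 ^ c)) (Fin (2 ^ c)) ℂ :=
  Matrix.of fun i j =>
    if (i : ℕ) = (j : ℕ) then α
    else if (j : ℕ) = (i : ℕ) + 1 then β
    else if (i : ℕ) = (j : ℕ) + 1 then γ
    else 0

/-- The 2×2 matrix `J = [[0,1],[0,0]]`. -/
def J : Matrix (Fin 2) (Fin 2) ℂ := !![0, 1; 0, 0]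

/-- The 2×2 matrix `J' = [[0,0],[1,0]]`. -/
def J' : Matrix (Fin 2) (Fin 2) ℂ := !![0, 0; 1, 0]

/-- Index identification `Fin 2 × Fin (2^k) ≃ Fin (2^(k+1))`, the first
    factor being the most significant (standard Kronecker ordering). -/
def idx (k : ℕ) : Fin 2 × Fin (2 ^ k) ≃ Fin (2 ^ (k + 1)) :=
  finProdFinEquiv.trans (finCongr (pow_succ' 2 k).symm)

/-- `kpow A k` is the k-fold Kronecker power `A^{⊗k}` of a 2×2 matrix. -/
def kpow (A : Matrix (Fin 2) (Fin 2) ℂ) : (k : ℕ) → Matrix (Fin (2 ^ k)) (Fin (2 ^ k)) ℂ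
  | 0 => 1
  | k + 1 => (Matrix.reindex (idx k) (idx k)) (A ⊗ₖ kpow A k)

/-- Index identification `Fin 2 × Fin (2^(c−1)) ≃ Fin (2^c)` for `c ≥ 2`. -/
def idx' (c : ℕ) (hc : 2 ≤ c) : Fin 2 × Fin (2 ^ (c - 1)) ≃ Fin (2 ^ c) :=
  (idx (c - 1)).trans (finCongr (by congr 1; omega))

lemma idx_val (k : ℕ) (a : Fin 2) (b : Fin (2 ^ k)) :
    ((idx k (a, b)) : ℕ) = b + 2 ^ k * a := by
  simp [idx, finCongr_apply]

lemma idx'_val (c : ℕ) (hc : 2 ≤ c) (a : Fin 2) (b : Fin (2 ^ (c - 1))) :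
    ((idx' c hc (a, b)) : ℕ) = b + 2 ^ (c - 1) * a := by
  simp [idx', finCongr_apply, idx_val]

lemma kpow_J_apply (k : ℕ) (i j : Fin (2 ^ k)) :
    kpow J k i j = if (i : ℕ) = 0 ∧ (j : ℕ) = 2 ^ k - 1 then 1 else 0 := by
  induction k with
  | zero =>
      have h0 := i.isLt; have h0' := j.isLt
      simp only [pow_zero] at h0 h0'
      simp only [kpow, Matrix.one_apply, Fin.ext_iff]
      split_ifs <;> first | rfl | omega
  | succ k ih =>
      obtain ⟨⟨a, b⟩, rfl⟩ := (idx k).surjective i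
      obtain ⟨⟨a', b'⟩, rfl⟩ := (idx k).surjective j
      have hb := b.isLt
      have hb' := b'.isLt
      have h1 : (1:ℕ) ≤ 2 ^ k := Nat.one_le_two_pow
      simp only [kpow, Matrix.reindex_apply, Matrix.submatrix_apply,
        Equiv.symm_apply_apply, Matrix.kroneckerMap_apply, ih, idx_val]
      fin_cases a <;> fin_cases a' <;>
        simp [J, pow_succ, -Fin.val_eq_zero_iff] <;> first | omega | (split_ifs <;> first | rfl | omega)

lemma kpow_J'_apply (k : ℕ) (i j : Fin (2 ^ k)) :
    kpow J' k i j = if (i : ℕ) = 2 ^ k - 1 ∧ (j : ℕ) = 0 then 1 else 0 := by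
  induction k with
  | zero =>
      have h0 := i.isLt; have h0' := j.isLt
      simp only [pow_zero] at h0 h0'
      simp only [kpow, Matrix.one_apply, Fin.ext_iff]
      split_ifs <;> first | rfl | omega
  | succ k ih =>
      obtain ⟨⟨a, b⟩, rfl⟩ := (idx k).surjective i
      obtain ⟨⟨a', b'⟩, rfl⟩ := (idx k).surjective j
      have hb := b.isLt
      have hb' := b'.isLt
      have h1 : (1:ℕ) ≤ 2 ^ k := Nat.one_le_two_pow
      simp only [kpow, Matrix.reindex_apply, Matrix.submatrix_apply,
        Equiv.symm_apply_apply, Matrix.kroneckerMap_apply, ih, idx_val]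
      fin_cases a <;> fin_cases a' <;>
        simp [J', pow_succ, -Fin.val_eq_zero_iff] <;> first | omega | (split_ifs <;> first | rfl | omega)

theorem tridiagonal_kronecker_recursion (c : ℕ) (hc : 2 ≤ c) (α β γ : ℂ) :
    triD c α β γ =
      (Matrix.reindex (idx' c hc) (idx' c hc))
          ((1 : Matrix (Fin 2) (Fin 2) ℂ) ⊗ₖ triD (c - 1) α β γ)
      + β • (Matrix.reindex (idx' c hc) (idx' c hc)) (J ⊗ₖ kpow J' (c - 1))
      + γ • (Matrix.reindex (idx' c hc) (idx' c hc)) (J' ⊗ₖ kpow J (c - 1)) := by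
  ext i j
  obtain ⟨⟨a, b⟩, rfl⟩ := (idx' c hc).surjective i
  obtain ⟨⟨a', b'⟩, rfl⟩ := (idx' c hc).surjective j
  have hb := b.isLt
  have hb' := b'.isLt
  have h1 : (1:ℕ) ≤ 2 ^ (c - 1) := Nat.one_le_two_pow
  simp only [Matrix.add_apply, Matrix.smul_apply, Matrix.reindex_apply,
    Matrix.submatrix_apply, Equiv.symm_apply_apply, Matrix.kroneckerMap_apply,
    kpow_J_apply, kpow_J'_apply, triD, Matrix.of_apply, idx'_val, smul_eq_mul]
  fin_cases a <;> fin_cases a' <;>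
    simp [J, J', Matrix.one_apply, -Fin.val_eq_zero_iff] <;>
    split_ifs <;> first | rfl | omega
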